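/- With β_e = β* + Σ_e⁻¹(η* + δ_e) and S_β invertible as above, the estimation error satisfies the exact identity S_β(β̃ − β*) = (Σ_e Σ_e⁻¹/σ_e²)(Σ_e δ_e/σ_e²) − (Σ_e 1/σ_e²)(Σ_e Σ_e⁻¹δ_e/σ_e²). In particular if all δ_e are equal to a common δ, then β̃ = β*. -/
import Mathlib


open Matrix Finset

private lemma sum_mulVec' {D E : ℕ} (M : Fin E → Matrix (Fin D) (Fin D) ℝ)
    (v : Fin D → ℝ) : (∑ e, M e).mulVec v = ∑ e, (M e).mulVec v := by
  funext i
  simp [Matrix.mulVec, dotProduct, Finset.sum_apply, Finset.sum_mul, Matrix.sum_apply]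
  rw [Finset.sum_comm]

/-- Exact misspecification error identity for KL regression, and unbiasedness
when the misspecification is common to all environments. -/
theorem kl_regression_error_identity {D E : ℕ} (hE : 1 ≤ E)
    (S : Fin E → Matrix (Fin D) (Fin D) ℝ) (s2 : Fin E → ℝ) (b : Fin E → Fin D → ℝ)
    (hS : ∀ e, (S e).PosDef) (hs2 : ∀ e, 0 < s2 e)
    (bstar etastar : Fin D → ℝ) (δ : Fin E → Fin D → ℝ)
    (hmodel : ∀ e, b e = bstar + (S e)⁻¹.mulVec (etastar + δ e))
    (Sbeta : Matrix (Fin D) (Fin D) ℝ)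
    (hSbeta : Sbeta = (∑ e, (s2 e)⁻¹ • (S e)⁻¹) * (∑ e, (s2 e)⁻¹ • S e)
      - ((∑ e, (s2 e)⁻¹) ^ 2) • (1 : Matrix (Fin D) (Fin D) ℝ))
    (hinv : IsUnit Sbeta)
    (btilde : Fin D → ℝ)
    (hbt : btilde = Sbeta⁻¹.mulVec
        ((∑ e, (s2 e)⁻¹ • (S e)⁻¹).mulVec (∑ e, (s2 e)⁻¹ • (S e).mulVec (b e))
          - (∑ e, (s2 e)⁻¹) • (∑ e, (s2 e)⁻¹ • b e))) :
    Sbeta.mulVec (btilde - bstar) =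
      (∑ e, (s2 e)⁻¹ • (S e)⁻¹).mulVec (∑ e, (s2 e)⁻¹ • δ e)
        - (∑ e, (s2 e)⁻¹) • (∑ e, (s2 e)⁻¹ • (S e)⁻¹.mulVec (δ e)) ∧
    (∀ δ0 : Fin D → ℝ, (∀ e, δ e = δ0) → btilde = bstar) := by
  set c : ℝ := ∑ e, (s2 e)⁻¹ with hc
  set A : Matrix (Fin D) (Fin D) ℝ := ∑ e, (s2 e)⁻¹ • (S e)⁻¹ with hA
  set B : Matrix (Fin D) (Fin D) ℝ := ∑ e, (s2 e)⁻¹ • S e with hB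
  have hSdet : ∀ e, IsUnit (S e).det := fun e => (hS e).det_pos.ne'.isUnit
  have hSSinv : ∀ e, S e * (S e)⁻¹ = 1 := fun e => Matrix.mul_nonsing_inv _ (hSdet e)
  have hSbdet : IsUnit Sbeta.det := (Matrix.isUnit_iff_isUnit_det _).mp hinv
  -- step 1
  have h1 : (∑ e, (s2 e)⁻¹ • (S e).mulVec (b e))
      = B.mulVec bstar + c • etastar + ∑ e, (s2 e)⁻¹ • δ e := by
    have : ∀ e, (s2 e)⁻¹ • (S e).mulVec (b e)
        = (s2 e)⁻¹ • (S e).mulVec bstar + (s2 e)⁻¹ • etastar + (s2 e)⁻¹ • δ e := by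
      intro e
      rw [hmodel e, Matrix.mulVec_add, Matrix.mulVec_mulVec, hSSinv e, Matrix.one_mulVec]
      module
    rw [Finset.sum_congr rfl (fun e _ => this e)]
    rw [Finset.sum_add_distrib, Finset.sum_add_distrib, hB, sum_mulVec', hc,
      Finset.sum_smul]
    simp [smul_mulVec]
  -- step 2
  have h2 : (∑ e, (s2 e)⁻¹ • b e)
      = c • bstar + A.mulVec etastar + ∑ e, (s2 e)⁻¹ • (S e)⁻¹.mulVec (δ e) := by
    have : ∀ e, (s2 e)⁻¹ • b e
        = (s2 e)⁻¹ • bstar + (s2 e)⁻¹ • (S e)⁻¹.mulVec etastar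
          + (s2 e)⁻¹ • (S e)⁻¹.mulVec (δ e) := by
      intro e
      rw [hmodel e, Matrix.mulVec_add]
      module
    rw [Finset.sum_congr rfl (fun e _ => this e)]
    rw [Finset.sum_add_distrib, Finset.sum_add_distrib, hA, sum_mulVec', hc,
      Finset.sum_smul]
    simp [smul_mulVec]
  -- the inner vector
  have hinner : A.mulVec (∑ e, (s2 e)⁻¹ • (S e).mulVec (b e)) - c • (∑ e, (s2 e)⁻¹ • b e)
      = Sbeta.mulVec bstar + (A.mulVec (∑ e, (s2 e)⁻¹ • δ e)
          - c • ∑ e, (s2 e)⁻¹ • (S e)⁻¹.mulVec (δ e)) := by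
    rw [h1, h2, hSbeta, Matrix.sub_mulVec, Matrix.smul_mulVec, Matrix.one_mulVec,
      ← Matrix.mulVec_mulVec]
    rw [Matrix.mulVec_add, Matrix.mulVec_add, Matrix.mulVec_smul]
    module
  have hmain : Sbeta.mulVec (btilde - bstar)
      = A.mulVec (∑ e, (s2 e)⁻¹ • δ e) - c • ∑ e, (s2 e)⁻¹ • (S e)⁻¹.mulVec (δ e) := by
    rw [Matrix.mulVec_sub, hbt, Matrix.mulVec_mulVec, Matrix.mul_nonsing_inv _ hSbdet,
      Matrix.one_mulVec, hinner]
    abel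
  refine ⟨hmain, ?_⟩
  intro δ0 hδ0
  have hzero : Sbeta.mulVec (btilde - bstar) = 0 := by
    rw [hmain]
    have e1 : (∑ e, (s2 e)⁻¹ • δ e) = c • δ0 := by
      simp only [hδ0, hc, Finset.sum_smul]
    have e2 : (∑ e, (s2 e)⁻¹ • (S e)⁻¹.mulVec (δ e)) = A.mulVec δ0 := by
      simp only [hδ0, hA, sum_mulVec', smul_mulVec]
    rw [e1, e2, Matrix.mulVec_smul]
    abel
  have : btilde - bstar = 0 := by
    have := congrArg (Sbeta⁻¹.mulVec) hzero
    rwa [Matrix.mulVec_mulVec, Matrix.nonsing_inv_mul _ hSbdet, Matrix.one_mulVec,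
      Matrix.mulVec_zero] at this
  funext i
  have := congrFun this i
  simp only [Pi.sub_apply, Pi.zero_apply, sub_eq_zero] at this
  exact this
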